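/- Let f(x) = f(0) + Σᵢ₌₁ⁿ xᵢ^{2d} + f_α x^α with |α| < 2d and f_α x^α not a square. If 0 < M < |α|·[(f_α/2d)^{2d}·α^α]^{1/(2d-|α|)}, then f(x) ≥ f(0) + M - |f_α|·[(M/|α|)^{|α|}·α^α]^{1/(2d)} for all x with Σᵢ xᵢ^{2d} ≤ M. -/

import Mathlib

open Finset

lemma aux_amgm {n : ℕ} (α : Fin n → ℕ) (y : Fin n → ℝ) (hy : ∀ i, 0 ≤ y i)
    (hs : 0 < ∑ i, α i) :
    ∏ i, y i ^ α i ≤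
      ((∑ i, y i) / ((∑ i, α i : ℕ) : ℝ)) ^ (∑ i, α i) * ∏ i, ((α i : ℝ)) ^ (α i) := by
  set s : ℝ := ((∑ i, α i : ℕ) : ℝ) with hsdef
  have hsR : (0 : ℝ) < s := by rw [hsdef]; exact_mod_cast hs
  have hsum : ∑ i, ((α i : ℝ)) = s := by rw [hsdef]; push_cast; ring
  have hT : 0 ≤ ∑ i, y i := Finset.sum_nonneg fun i _ => hy i
  have hz : ∀ i ∈ Finset.univ (α := Fin n), 0 ≤ y i / (α i : ℝ) :=
    fun i _ => div_nonneg (hy i) (Nat.cast_nonneg _)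
  have key := Real.geom_mean_le_arith_mean Finset.univ (fun i => ((α i : ℝ)))
      (fun i => y i / (α i : ℝ)) (fun i _ => Nat.cast_nonneg _) (by rw [hsum]; exact hsR) hz
  rw [hsum] at key
  have hprod : (∏ i, (y i / (α i : ℝ)) ^ ((α i : ℝ))) = ∏ i, (y i / (α i : ℝ)) ^ (α i) :=
    Finset.prod_congr rfl fun i _ => Real.rpow_natCast _ _
  rw [hprod] at key
  have hQ : 0 ≤ ∏ i, (y i / (α i : ℝ)) ^ (α i) :=
    Finset.prod_nonneg fun i _ => pow_nonneg (hz i (Finset.mem_univ i)) _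
  have hrhs : (∑ i, ((α i : ℝ)) * (y i / (α i : ℝ))) / s ≤ (∑ i, y i) / s := by
    gcongr with i hi
    refine ?_
    rcases Nat.eq_zero_or_pos (α i) with h | h
    · simp [h, hy i]
    · rw [mul_div_cancel₀]
      exact_mod_cast h.ne'
  have key2 : (∏ i, (y i / (α i : ℝ)) ^ (α i)) ^ (s⁻¹) ≤ (∑ i, y i) / s := key.trans hrhs
  -- raise both sides to the power s (as natural number ∑ α i)
  have key3 : (∏ i, (y i / (α i : ℝ)) ^ (α i)) ≤ ((∑ i, y i) / s) ^ (∑ i, α i) := by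
    have h1 := Real.rpow_le_rpow (Real.rpow_nonneg hQ _) key2 hsR.le
    rw [← Real.rpow_mul hQ, inv_mul_cancel₀ hsR.ne', Real.rpow_one] at h1
    rw [← Real.rpow_natCast ((∑ i, y i) / s) (∑ i, α i), ← hsdef]
    exact h1
  calc ∏ i, y i ^ α i = ∏ i, ((α i : ℝ)) ^ (α i) * (y i / (α i : ℝ)) ^ (α i) := by
        refine Finset.prod_congr rfl fun i _ => ?_
        rcases Nat.eq_zero_or_pos (α i) with h | h
        · simp [h]
        · rw [← mul_pow, mul_div_cancel₀ _ (by exact_mod_cast h.ne' : ((α i : ℝ)) ≠ 0)]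
    _ = (∏ i, ((α i : ℝ)) ^ (α i)) * ∏ i, (y i / (α i : ℝ)) ^ (α i) := Finset.prod_mul_distrib
    _ ≤ (∏ i, ((α i : ℝ)) ^ (α i)) * (((∑ i, y i) / s) ^ (∑ i, α i)) := by
        refine mul_le_mul_of_nonneg_left key3 ?_
        exact Finset.prod_nonneg fun i _ => pow_nonneg (Nat.cast_nonneg _) _
    _ = ((∑ i, y i) / s) ^ (∑ i, α i) * ∏ i, ((α i : ℝ)) ^ (α i) := mul_comm _ _


/-- For `f(x) = f(0) + ∑ᵢ xᵢ^(2d) + f_α x^α` with `0 < |α| < 2d` and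
`f_α x^α` not a square, if `0 < M < |α|·[(f_α/2d)^(2d)·α^α]^(1/(2d-|α|))` then
`f(x) ≥ f(0) + M - |f_α|·[(M/|α|)^|α|·α^α]^(1/(2d))` on the ball. -/
theorem stmt_11 (n d : ℕ) (hd : 1 ≤ d) (α : Fin n → ℕ)
    (hα0 : 0 < ∑ i, α i) (hαlt : ∑ i, α i < 2 * d)
    (fα : ℝ) (hfα : fα ≠ 0) (hns : ¬ (0 ≤ fα ∧ ∀ i, Even (α i)))
    (f0 M : ℝ) (hM : 0 < M)
    (hMlt : M < ((∑ i, α i : ℕ) : ℝ) *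
        (((fα / (2 * (d : ℝ))) ^ (2 * d) * ∏ i, ((α i : ℝ)) ^ (α i)) ^
          ((1 : ℝ) / (2 * (d : ℝ) - ((∑ i, α i : ℕ) : ℝ))))) :
    ∀ x : Fin n → ℝ, (∑ i, x i ^ (2 * d)) ≤ M →
      f0 + M - |fα| *
          (((M / ((∑ i, α i : ℕ) : ℝ)) ^ (∑ i, α i) * ∏ i, ((α i : ℝ)) ^ (α i)) ^
            ((1 : ℝ) / (2 * (d : ℝ)))) ≤
        f0 + (∑ i, x i ^ (2 * d)) + fα * ∏ i, x i ^ (α i) := by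
  intro x hx
  have hev : Even (2 * d) := ⟨d, two_mul d⟩
  set sR : ℝ := ((∑ i, α i : ℕ) : ℝ) with hsRdef
  set P : ℝ := ∏ i, ((α i : ℝ)) ^ (α i) with hPdef
  set DR : ℝ := 2 * (d : ℝ) with hDRdef
  have hsR : (0 : ℝ) < sR := by rw [hsRdef]; exact_mod_cast hα0
  have hDR : (0 : ℝ) < DR := by
    rw [hDRdef]; have : (1 : ℝ) ≤ (d : ℝ) := by exact_mod_cast hd
    linarith
  have hsd : sR < DR := by
    rw [hsRdef, hDRdef]
    have := hαlt; push_cast; exact_mod_cast this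
  have hP : (0 : ℝ) < P := by
    rw [hPdef]
    refine Finset.prod_pos fun i _ => ?_
    rcases Nat.eq_zero_or_pos (α i) with h | h
    · simp [h]
    · exact pow_pos (by exact_mod_cast h) _
  have hDcast : ((2 * d : ℕ) : ℝ) = DR := by rw [hDRdef]; push_cast; ring
  -- convert a natural power `a ^ (2*d)` (a ≥ 0) to an rpow
  have hpowR : ∀ a : ℝ, 0 ≤ a → a ^ (2 * d) = a ^ (DR : ℝ) := by
    intro a ha
    rw [← hDcast, Real.rpow_natCast]
  set e : ℝ := DR - sR with hedef
  have he : (0 : ℝ) < e := by rw [hedef]; linarith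
  set t : ℝ := sR / DR with htdef
  have ht : (0 : ℝ) < t := div_pos hsR hDR
  have hut : e / DR + t = 1 := by
    rw [htdef, hedef]; field_simp; ring
  set c : ℝ := (P / sR ^ (sR : ℝ)) ^ ((1 : ℝ) / DR) with hcdef
  have hc0 : (0 : ℝ) < c := by
    rw [hcdef]
    exact Real.rpow_pos_of_pos (div_pos hP (Real.rpow_pos_of_pos hsR _)) _
  -- rewrite C(S) = ((S/sR)^s * P)^(1/DR) as S^t * c
  have hCS : ∀ S : ℝ, 0 ≤ S →
      ((S / sR) ^ (∑ i, α i) * P) ^ ((1 : ℝ) / DR) = S ^ (t : ℝ) * c := by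
    intro S hS
    have h1 : (S / sR) ^ (∑ i, α i) * P = S ^ (sR : ℝ) * (P / sR ^ (sR : ℝ)) := by
      rw [div_pow, ← Real.rpow_natCast S (∑ i, α i), ← Real.rpow_natCast sR (∑ i, α i),
        ← hsRdef]
      field_simp
    rw [h1, Real.mul_rpow (Real.rpow_nonneg hS _)
      (div_nonneg hP.le (Real.rpow_nonneg hsR.le _)), ← Real.rpow_mul hS, mul_one_div,
      ← htdef, ← hcdef]
  -- Step 1: from hMlt, derive M^(e/DR) ≤ t * (|fα| * c)
  have hc : M ^ (e / DR : ℝ) ≤ t * (|fα| * c) := by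
    have hA : (0 : ℝ) < (fα / DR) ^ (2 * d) * P :=
      mul_pos (hev.pow_pos (div_ne_zero hfα hDR.ne')) hP
    have h1 : M ^ (e : ℝ) < sR ^ (e : ℝ) * ((fα / DR) ^ (2 * d) * P) := by
      have h2 := Real.rpow_lt_rpow hM.le hMlt he
      rwa [Real.mul_rpow hsR.le (Real.rpow_nonneg hA.le _), ← Real.rpow_mul hA.le,
        one_div_mul_cancel he.ne', Real.rpow_one] at h2
    have hfabs : (fα / DR) ^ (2 * d) = |fα| ^ (DR : ℝ) / DR ^ (DR : ℝ) := by
      rw [div_pow, ← hev.pow_abs fα, hpowR _ (abs_nonneg fα), hpowR _ hDR.le]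
    rw [hfabs] at h1
    have hinner : sR ^ (e : ℝ) * (|fα| ^ (DR : ℝ) / DR ^ (DR : ℝ) * P)
        = ((sR / DR * |fα|) ^ (DR : ℝ)) * (P / sR ^ (sR : ℝ)) := by
      rw [Real.mul_rpow (div_nonneg hsR.le hDR.le) (abs_nonneg _),
        Real.div_rpow hsR.le hDR.le, hedef, Real.rpow_sub hsR]
      field_simp
    rw [hinner] at h1
    have h3 := Real.rpow_le_rpow (Real.rpow_nonneg hM.le _) h1.le
      (by positivity : (0:ℝ) ≤ 1 / DR)
    rwa [← Real.rpow_mul hM.le, mul_one_div,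
      Real.mul_rpow (Real.rpow_nonneg (by positivity) _)
        (div_nonneg hP.le (Real.rpow_nonneg hsR.le _)),
      ← Real.rpow_mul (by positivity : (0:ℝ) ≤ sR / DR * |fα|),
      mul_one_div_cancel hDR.ne', Real.rpow_one, ← hcdef, ← htdef,
      mul_assoc] at h3
  -- Step 2: AM-GM bound on the monomial
  set S : ℝ := ∑ i, x i ^ (2 * d) with hSdef
  have hS0 : (0 : ℝ) ≤ S := Finset.sum_nonneg fun i _ => hev.pow_nonneg _
  have habs : |∏ i, x i ^ α i| ≤ S ^ (t : ℝ) * c := by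
    have h2d : |∏ i, x i ^ α i| ^ (2 * d) = ∏ i, (x i ^ (2 * d)) ^ α i := by
      rw [Finset.abs_prod, ← Finset.prod_pow]
      refine Finset.prod_congr rfl fun i _ => ?_
      rw [abs_pow, ← pow_mul, mul_comm (α i) (2 * d), pow_mul, hev.pow_abs]
    have hag := aux_amgm α (fun i => x i ^ (2 * d)) (fun i => hev.pow_nonneg _) hα0
    rw [← hPdef, ← hsRdef, ← hSdef, ← h2d] at hag
    have h4 := Real.rpow_le_rpow (pow_nonneg (abs_nonneg _) _) hag
      (by positivity : (0:ℝ) ≤ 1 / DR)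
    rwa [hCS S hS0, hpowR _ (abs_nonneg _), ← Real.rpow_mul (abs_nonneg _),
      mul_one_div_cancel hDR.ne', Real.rpow_one] at h4
  -- Step 3: the scalar inequality M - |fα| M^t c ≤ S - |fα| S^t c
  have hSM : S ≤ M := hx
  have hts : S ^ (t : ℝ) ≤ M ^ (t : ℝ) := Real.rpow_le_rpow hS0 hSM ht.le
  have hyoung : S ^ (t : ℝ) * M ^ (e / DR : ℝ) ≤ t * S + (e / DR) * M :=
    Real.geom_mean_le_arith_mean2_weighted ht.le (by positivity) hS0 hM.le
      (by linarith [hut])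
  have hmain : M - |fα| * (M ^ (t : ℝ) * c) ≤ S - |fα| * (S ^ (t : ℝ) * c) := by
    have k1 : M ^ (e / DR : ℝ) * (M ^ (t : ℝ) - S ^ (t : ℝ)) ≤
        (t * (|fα| * c)) * (M ^ (t : ℝ) - S ^ (t : ℝ)) :=
      mul_le_mul_of_nonneg_right hc (by linarith)
    have k2 : M ^ (e / DR : ℝ) * M ^ (t : ℝ) = M := by
      rw [← Real.rpow_add hM, hut, Real.rpow_one]
    have k3 : t * (M - S) ≤ t * (|fα| * c * (M ^ (t : ℝ) - S ^ (t : ℝ))) := by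
      nlinarith [k1, k2, hyoung]
    have k4 : M - S ≤ |fα| * c * (M ^ (t : ℝ) - S ^ (t : ℝ)) :=
      (mul_le_mul_iff_right₀ ht).mp k3
    nlinarith [k4]
  -- Assemble
  rw [hCS M hM.le]
  have hb : -(|fα| * (S ^ (t : ℝ) * c)) ≤ fα * ∏ i, x i ^ α i := by
    have h5 : |fα * ∏ i, x i ^ α i| ≤ |fα| * (S ^ (t : ℝ) * c) := by
      rw [abs_mul]
      exact mul_le_mul_of_nonneg_left habs (abs_nonneg _)
    linarith [neg_abs_le (fα * ∏ i, x i ^ α i), h5]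
  linarith [hmain, hb]
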